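/- Let C > 0 and let (a_j)_{j≥0} be a sequence of strictly positive real numbers such that for every integer N ≥ 2, a_N ≤ C · ∑ a_j a_k a_ℓ, where the sum ranges over all ordered triples (j,k,ℓ) of nonnegative integers with j + k + ℓ = N and j,k,ℓ ≤ N−1. Then there exist constants C₀, C₁ > 0, depending only on C and a₀, such that a_N ≤ C₁ (C₀ a₁)^N for all N ≥ 1. -/
import Mathlib


open Finset

noncomputable def gw (j : ℕ) : ℝ := (((j:ℝ)+1)^2)⁻¹

lemma gw_pos (j : ℕ) : 0 < gw j := by unfold gw; positivity

lemma gw_le_one (j : ℕ) : gw j ≤ 1 := by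
  unfold gw
  rw [inv_le_one_iff₀]
  right
  nlinarith [Nat.cast_nonneg (α := ℝ) j]

lemma sum_gw_aux (n : ℕ) : ∑ j ∈ range n, gw j ≤ 2 - 2/((n:ℝ)+1) := by
  induction n with
  | zero => norm_num
  | succ n ih =>
    rw [Finset.sum_range_succ]
    have hn : (0:ℝ) < (n:ℝ)+1 := by positivity
    have h1 : gw n ≤ 2/((n:ℝ)+1) - 2/(((n:ℕ):ℝ)+1+1) := by
      unfold gw
      rw [div_sub_div _ _ (ne_of_gt hn) (by positivity), inv_eq_one_div, div_le_div_iff₀ (by positivity) (by positivity)]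
      push_cast
      nlinarith
    push_cast at *
    linarith

lemma sum_gw_le (n : ℕ) : ∑ j ∈ range n, gw j ≤ 2 := by
  have := sum_gw_aux n
  have hn : (0:ℝ) < 2/((n:ℝ)+1) := by positivity
  linarith

lemma pair_sum_le (N : ℕ) :
    ∑ q ∈ range N ×ˢ range N, gw q.1 * gw q.2 ≤ 4 := by
  rw [Finset.sum_product, ← Finset.sum_mul_sum]
  have h := sum_gw_le N
  have h0 : (0:ℝ) ≤ ∑ j ∈ range N, gw j :=
    Finset.sum_nonneg fun j _ => (gw_pos j).le
  nlinarith

lemma gw_big {m N : ℕ} (h : N ≤ 3 * m) : gw m ≤ 9 * gw N := by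
  unfold gw
  have h' : (N:ℝ) ≤ 3 * m := by exact_mod_cast h
  rw [show (9:ℝ) * (((N:ℝ)+1)^2)⁻¹ = ((((N:ℝ)+1)^2)/9)⁻¹ by
    rw [inv_div]; ring]
  apply inv_anti₀ (by positivity)
  nlinarith [Nat.cast_nonneg (α := ℝ) m, Nat.cast_nonneg (α := ℝ) N]

lemma triple_sum_le (N : ℕ) :
    ∑ p ∈ (range N ×ˢ range N ×ˢ range N).filter
        (fun p : ℕ × ℕ × ℕ => p.1 + p.2.1 + p.2.2 = N),
      gw p.1 * gw p.2.1 * gw p.2.2 ≤ 108 * gw N := by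
  set S := (range N ×ˢ range N ×ˢ range N).filter
      (fun p : ℕ × ℕ × ℕ => p.1 + p.2.1 + p.2.2 = N) with hS
  have hmem : ∀ p ∈ S, p.1 + p.2.1 + p.2.2 = N ∧ p.1 < N ∧ p.2.1 < N ∧ p.2.2 < N := by
    intro p hp
    simp only [hS, Finset.mem_filter, Finset.mem_product, Finset.mem_range] at hp
    tauto
  have key : ∀ (e : ℕ × ℕ × ℕ → ℕ × ℕ), (∀ p ∈ S, ∀ q ∈ S, e p = e q → p = q) →
      (∀ p ∈ S, e p ∈ range N ×ˢ range N) →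
      ∑ p ∈ S, gw (e p).1 * gw (e p).2 ≤ 4 := by
    intro e hinj hsub
    have heq : ∑ q ∈ S.image e, gw q.1 * gw q.2
        = ∑ p ∈ S, gw (e p).1 * gw (e p).2 := Finset.sum_image hinj
    rw [← heq]
    refine le_trans (Finset.sum_le_sum_of_subset_of_nonneg ?_ ?_) (pair_sum_le N)
    · intro q hq
      rw [Finset.mem_image] at hq
      obtain ⟨p, hp, rfl⟩ := hq
      exact hsub p hp
    · intro q _ _
      exact mul_nonneg (gw_pos _).le (gw_pos _).le
  have k1 : ∑ p ∈ S, gw p.2.1 * gw p.2.2 ≤ 4 := by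
    have := key (fun p => p.2) (by
      intro p hp q hq h
      have h1 := (hmem p hp).1; have h2 := (hmem q hq).1
      have h' : p.2 = q.2 := h
      have e1 : p.2.1 = q.2.1 := by rw [h']
      have e2 : p.2.2 = q.2.2 := by rw [h']
      exact Prod.ext (by omega) h')
      (by
      intro p hp
      have h := hmem p hp
      simp only [Finset.mem_product, Finset.mem_range]
      exact ⟨h.2.2.1, h.2.2.2⟩)
    simpa using this
  have k2 : ∑ p ∈ S, gw p.1 * gw p.2.2 ≤ 4 := by
    have := key (fun p => (p.1, p.2.2)) (by
      intro p hp q hq h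
      have h1 := (hmem p hp).1; have h2 := (hmem q hq).1
      rw [Prod.mk.injEq] at h
      obtain ⟨e1, e2⟩ := h
      exact Prod.ext e1 (Prod.ext (by omega) e2))
      (by
      intro p hp
      have h := hmem p hp
      simp only [Finset.mem_product, Finset.mem_range]
      exact ⟨h.2.1, h.2.2.2⟩)
    simpa using this
  have k3 : ∑ p ∈ S, gw p.1 * gw p.2.1 ≤ 4 := by
    have := key (fun p => (p.1, p.2.1)) (by
      intro p hp q hq h
      have h1 := (hmem p hp).1; have h2 := (hmem q hq).1
      rw [Prod.mk.injEq] at h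
      obtain ⟨e1, e2⟩ := h
      exact Prod.ext e1 (Prod.ext e2 (by omega)))
      (by
      intro p hp
      have h := hmem p hp
      simp only [Finset.mem_product, Finset.mem_range]
      exact ⟨h.2.1, h.2.2.1⟩)
    simpa using this
  have hif : ∀ (c : Prop) [Decidable c] (x : ℝ), 0 ≤ x → (if c then x else 0) ≤ x := by
    intro c _ x hx
    split
    · exact le_rfl
    · exact hx
  have hif0 : ∀ (c : Prop) [Decidable c] (x : ℝ), 0 ≤ x → (0:ℝ) ≤ (if c then x else 0) := by
    intro c _ x hx
    split
    · exact hx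
    · exact le_rfl
  have step : ∀ p ∈ S, gw p.1 * gw p.2.1 * gw p.2.2 ≤
      (if N ≤ 3 * p.1 then (9 * gw N) * (gw p.2.1 * gw p.2.2) else 0)
      + (if N ≤ 3 * p.2.1 then (9 * gw N) * (gw p.1 * gw p.2.2) else 0)
      + (if N ≤ 3 * p.2.2 then (9 * gw N) * (gw p.1 * gw p.2.1) else 0) := by
    intro p hp
    have h := (hmem p hp).1
    have n1 := hif0 (N ≤ 3 * p.1) ((9 * gw N) * (gw p.2.1 * gw p.2.2)) (mul_nonneg (mul_nonneg (by norm_num) (gw_pos N).le) (mul_nonneg (gw_pos _).le (gw_pos _).le))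
    have n2 := hif0 (N ≤ 3 * p.2.1) ((9 * gw N) * (gw p.1 * gw p.2.2)) (mul_nonneg (mul_nonneg (by norm_num) (gw_pos N).le) (mul_nonneg (gw_pos _).le (gw_pos _).le))
    have n3 := hif0 (N ≤ 3 * p.2.2) ((9 * gw N) * (gw p.1 * gw p.2.1)) (mul_nonneg (mul_nonneg (by norm_num) (gw_pos N).le) (mul_nonneg (gw_pos _).le (gw_pos _).le))
    have hcase : N ≤ 3 * p.1 ∨ N ≤ 3 * p.2.1 ∨ N ≤ 3 * p.2.2 := by omega
    rcases hcase with hc | hc | hc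
    · have hb : gw p.1 * gw p.2.1 * gw p.2.2 ≤ (9 * gw N) * (gw p.2.1 * gw p.2.2) := by
        have := gw_big hc
        nlinarith [gw_pos p.1, gw_pos p.2.1, gw_pos p.2.2, gw_pos N, mul_pos (gw_pos p.2.1) (gw_pos p.2.2), mul_pos (gw_pos p.1) (gw_pos p.2.2), mul_pos (gw_pos p.1) (gw_pos p.2.1)]
      rw [if_pos hc]; linarith
    · have hb : gw p.1 * gw p.2.1 * gw p.2.2 ≤ (9 * gw N) * (gw p.1 * gw p.2.2) := by
        have := gw_big hc
        nlinarith [gw_pos p.1, gw_pos p.2.1, gw_pos p.2.2, gw_pos N, mul_pos (gw_pos p.2.1) (gw_pos p.2.2), mul_pos (gw_pos p.1) (gw_pos p.2.2), mul_pos (gw_pos p.1) (gw_pos p.2.1)]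
      rw [if_pos hc]; linarith
    · have hb : gw p.1 * gw p.2.1 * gw p.2.2 ≤ (9 * gw N) * (gw p.1 * gw p.2.1) := by
        have := gw_big hc
        nlinarith [gw_pos p.1, gw_pos p.2.1, gw_pos p.2.2, gw_pos N, mul_pos (gw_pos p.2.1) (gw_pos p.2.2), mul_pos (gw_pos p.1) (gw_pos p.2.2), mul_pos (gw_pos p.1) (gw_pos p.2.1)]
      rw [if_pos hc]; linarith
  calc ∑ p ∈ S, gw p.1 * gw p.2.1 * gw p.2.2
      ≤ ∑ p ∈ S, ((if N ≤ 3 * p.1 then (9 * gw N) * (gw p.2.1 * gw p.2.2) else 0)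
        + (if N ≤ 3 * p.2.1 then (9 * gw N) * (gw p.1 * gw p.2.2) else 0)
        + (if N ≤ 3 * p.2.2 then (9 * gw N) * (gw p.1 * gw p.2.1) else 0)) :=
        Finset.sum_le_sum step
    _ ≤ ∑ p ∈ S, ((9 * gw N) * (gw p.2.1 * gw p.2.2)
        + (9 * gw N) * (gw p.1 * gw p.2.2)
        + (9 * gw N) * (gw p.1 * gw p.2.1)) := by
        apply Finset.sum_le_sum
        intro p _
        exact add_le_add (add_le_add (hif _ _ (mul_nonneg (mul_nonneg (by norm_num) (gw_pos N).le) (mul_nonneg (gw_pos _).le (gw_pos _).le))) (hif _ _ (mul_nonneg (mul_nonneg (by norm_num) (gw_pos N).le) (mul_nonneg (gw_pos _).le (gw_pos _).le))))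
          (hif _ _ (mul_nonneg (mul_nonneg (by norm_num) (gw_pos N).le) (mul_nonneg (gw_pos _).le (gw_pos _).le)))
    _ = (9 * gw N) * (∑ p ∈ S, gw p.2.1 * gw p.2.2)
        + (9 * gw N) * (∑ p ∈ S, gw p.1 * gw p.2.2)
        + (9 * gw N) * (∑ p ∈ S, gw p.1 * gw p.2.1) := by
        rw [Finset.sum_add_distrib, Finset.sum_add_distrib, ← Finset.mul_sum,
          ← Finset.mul_sum, ← Finset.mul_sum]
    _ ≤ (9 * gw N) * 4 + (9 * gw N) * 4 + (9 * gw N) * 4 := by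
        have h9 : (0:ℝ) ≤ 9 * gw N := mul_nonneg (by norm_num) (gw_pos N).le
        gcongr
    _ = 108 * gw N := by ring

/-- **Sequential Gronwall lemma.** Let `C > 0` and let `(a_j)` be a sequence of strictly
positive reals such that for every `N ≥ 2`,
`a_N ≤ C ∑_{j+k+ℓ = N, j,k,ℓ ≤ N-1} a_j a_k a_ℓ` (sum over ordered triples).
Then there are `C₀, C₁ > 0`, depending only on `C` and `a₀`, with
`a_N ≤ C₁ (C₀ a₁)^N` for all `N ≥ 1`. -/
theorem sequential_gronwall (C a₀ : ℝ) (hC : 0 < C) (ha₀ : 0 < a₀) :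
    ∃ C₀ > (0 : ℝ), ∃ C₁ > (0 : ℝ), ∀ a : ℕ → ℝ, a 0 = a₀ → (∀ j, 0 < a j) →
      (∀ N : ℕ, 2 ≤ N →
        a N ≤ C * ∑ p ∈ (Finset.range N ×ˢ Finset.range N ×ˢ Finset.range N).filter
            (fun p : ℕ × ℕ × ℕ => p.1 + p.2.1 + p.2.2 = N),
          a p.1 * a p.2.1 * a p.2.2) →
      ∀ N : ℕ, 1 ≤ N → a N ≤ C₁ * (C₀ * a 1) ^ N := by
  set D : ℝ := min 1 (1/(108*C*(a₀+1))) with hD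
  have hDpos : 0 < D := by
    apply lt_min one_pos
    positivity
  have hD1 : D ≤ 1 := min_le_left _ _
  set E : ℝ := max a₀ D with hE
  have hEpos : 0 < E := lt_of_lt_of_le ha₀ (le_max_left _ _)
  have hEle : E ≤ a₀ + 1 := max_le (by linarith) (by linarith)
  have hkey : 108 * C * E * D ≤ 1 := by
    have h2 : D ≤ 1/(108*C*(a₀+1)) := min_le_right _ _
    have h3 : 108 * C * (a₀+1) * D ≤ 1 := by
      have hX : (0:ℝ) < 108*C*(a₀+1) := by positivity
      have h4 := (le_div_iff₀ hX).mp h2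
      linarith
    calc 108 * C * E * D ≤ 108 * C * (a₀+1) * D := by
          apply mul_le_mul_of_nonneg_right _ hDpos.le
          apply mul_le_mul_of_nonneg_left hEle (by positivity)
      _ ≤ 1 := h3
  clear_value D E
  refine ⟨4/D, by positivity, D, hDpos, ?_⟩
  intro a ha0 hpos hrec
  set B : ℝ := (4/D) * a 1 with hB
  have hBpos : 0 < B := by
    have := hpos 1
    positivity
  clear_value B
  have key : ∀ n : ℕ, 1 ≤ n → a n ≤ D * B^n * gw n := by
    intro n
    induction n using Nat.strong_induction_on with
    | _ n ih =>
      intro hn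
      rcases eq_or_lt_of_le hn with h1 | h2
      · -- n = 1
        rw [← h1]
        have : D * B^1 * gw 1 = a 1 := by
          rw [hB]
          unfold gw
          push_cast
          field_simp
          ring
        rw [this]
      · -- n ≥ 2
        have h2' : 2 ≤ n := h2
        set S := (Finset.range n ×ˢ Finset.range n ×ˢ Finset.range n).filter
            (fun p : ℕ × ℕ × ℕ => p.1 + p.2.1 + p.2.2 = n) with hSdef
        have hmem : ∀ p ∈ S, p.1 + p.2.1 + p.2.2 = n ∧ p.1 < n ∧ p.2.1 < n ∧ p.2.2 < n := by
          intro p hp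
          simp only [hSdef, Finset.mem_filter, Finset.mem_product, Finset.mem_range] at hp
          tauto
        have hb : ∀ j, j < n → a j ≤ (if j = 0 then a₀ else D) * B^j * gw j := by
          intro j hj
          by_cases hj0 : j = 0
          · subst hj0
            rw [if_pos rfl, ha0] at *
            unfold gw
            norm_num
          · rw [if_neg hj0]
            exact ih j hj (Nat.one_le_iff_ne_zero.mpr hj0)
        have hterm : ∀ p ∈ S, a p.1 * a p.2.1 * a p.2.2 ≤
            (E * D * D * B^n) * (gw p.1 * gw p.2.1 * gw p.2.2) := by
          intro p hp
          obtain ⟨hsum, hp1, hp2, hp3⟩ := hmem p hp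
          have c1 := hb p.1 hp1
          have c2 := hb p.2.1 hp2
          have c3 := hb p.2.2 hp3
          set d1 : ℝ := if p.1 = 0 then a₀ else D with hd1
          set d2 : ℝ := if p.2.1 = 0 then a₀ else D with hd2
          set d3 : ℝ := if p.2.2 = 0 then a₀ else D with hd3
          have hd1p : 0 < d1 := by rw [hd1]; split <;> [exact ha₀; exact hDpos]
          have hd2p : 0 < d2 := by rw [hd2]; split <;> [exact ha₀; exact hDpos]
          have hd3p : 0 < d3 := by rw [hd3]; split <;> [exact ha₀; exact hDpos]
          have hprod : a p.1 * a p.2.1 * a p.2.2 ≤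
              (d1 * B^p.1 * gw p.1) * (d2 * B^p.2.1 * gw p.2.1) * (d3 * B^p.2.2 * gw p.2.2) := by
            have pa1 := (hpos p.1).le
            have pa2 := (hpos p.2.1).le
            have pa3 := (hpos p.2.2).le
            have g1 : 0 ≤ d1 * B^p.1 * gw p.1 := le_trans pa1 c1
            have g2 : 0 ≤ d2 * B^p.2.1 * gw p.2.1 := le_trans pa2 c2
            exact mul_le_mul (mul_le_mul c1 c2 pa2 g1) c3 pa3 (mul_nonneg g1 g2)
          have hBpow : B^p.1 * B^p.2.1 * B^p.2.2 = B^n := by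
            rw [← pow_add, ← pow_add, hsum]
          have hrearr : (d1 * B^p.1 * gw p.1) * (d2 * B^p.2.1 * gw p.2.1) *
              (d3 * B^p.2.2 * gw p.2.2)
              = (d1 * d2 * d3) * (B^p.1 * B^p.2.1 * B^p.2.2) *
                (gw p.1 * gw p.2.1 * gw p.2.2) := by ring
          have hbase : ∀ x : ℝ, x ≤ E → x * D * D ≤ E * D * D := fun x hx =>
            mul_le_mul_of_nonneg_right (mul_le_mul_of_nonneg_right hx hDpos.le) hDpos.le
          have hd : d1 * d2 * d3 ≤ E * D * D := by
            have hz12 : ¬(p.1 = 0 ∧ p.2.1 = 0) := by omega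
            have hz13 : ¬(p.1 = 0 ∧ p.2.2 = 0) := by omega
            have hz23 : ¬(p.2.1 = 0 ∧ p.2.2 = 0) := by omega
            have haE : a₀ ≤ E := hE ▸ le_max_left _ _
            have hDE : D ≤ E := hE ▸ le_max_right _ _
            rw [hd1, hd2, hd3]
            have haE : a₀ ≤ E := hE ▸ le_max_left _ _
            have hDE : D ≤ E := hE ▸ le_max_right _ _
            by_cases z1 : p.1 = 0
            · rw [if_pos z1, if_neg (show ¬ p.2.1 = 0 by omega),
                if_neg (show ¬ p.2.2 = 0 by omega)]
              exact hbase a₀ haE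
            · rw [if_neg z1]
              by_cases z2 : p.2.1 = 0
              · rw [if_pos z2, if_neg (show ¬ p.2.2 = 0 by omega)]
                calc D * a₀ * D = a₀ * D * D := by ring
                  _ ≤ E * D * D := hbase a₀ haE
              · rw [if_neg z2]
                by_cases z3 : p.2.2 = 0
                · rw [if_pos z3]
                  calc D * D * a₀ = a₀ * D * D := by ring
                    _ ≤ E * D * D := hbase a₀ haE
                · rw [if_neg z3]
                  exact hbase D hDE
          calc a p.1 * a p.2.1 * a p.2.2
              ≤ (d1 * d2 * d3) * (B^p.1 * B^p.2.1 * B^p.2.2) *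
                (gw p.1 * gw p.2.1 * gw p.2.2) := by rw [← hrearr]; exact hprod
            _ = (d1 * d2 * d3) * B^n * (gw p.1 * gw p.2.1 * gw p.2.2) := by rw [hBpow]
            _ ≤ (E * D * D) * B^n * (gw p.1 * gw p.2.1 * gw p.2.2) := by
                apply mul_le_mul_of_nonneg_right
                · apply mul_le_mul_of_nonneg_right hd (by positivity)
                · exact mul_nonneg (mul_nonneg (gw_pos _).le (gw_pos _).le) (gw_pos _).le
            _ = (E * D * D * B^n) * (gw p.1 * gw p.2.1 * gw p.2.2) := by ring
        have hsumle : ∑ p ∈ S, a p.1 * a p.2.1 * a p.2.2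
            ≤ (E * D * D * B^n) * (108 * gw n) := by
          calc ∑ p ∈ S, a p.1 * a p.2.1 * a p.2.2
              ≤ ∑ p ∈ S, (E * D * D * B^n) * (gw p.1 * gw p.2.1 * gw p.2.2) :=
                Finset.sum_le_sum hterm
            _ = (E * D * D * B^n) * ∑ p ∈ S, gw p.1 * gw p.2.1 * gw p.2.2 := by
                rw [Finset.mul_sum]
            _ ≤ (E * D * D * B^n) * (108 * gw n) := by
                apply mul_le_mul_of_nonneg_left (triple_sum_le n) (by positivity)
        calc a n ≤ C * ∑ p ∈ S, a p.1 * a p.2.1 * a p.2.2 := hrec n h2'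
          _ ≤ C * ((E * D * D * B^n) * (108 * gw n)) := by
              apply mul_le_mul_of_nonneg_left hsumle hC.le
          _ = (108 * C * E * D) * (D * B^n * gw n) := by ring
          _ ≤ 1 * (D * B^n * gw n) := by
              apply mul_le_mul_of_nonneg_right hkey
              have := gw_pos n
              positivity
          _ = D * B^n * gw n := one_mul _
  intro N hN
  have h1 := key N hN
  have h3 : (0:ℝ) ≤ D * B^N := by positivity
  have h2 : D * B^N * gw N ≤ D * B^N := by
    nlinarith [gw_le_one N, gw_pos N]
  have h4 : D * B^N = D * ((4/D) * a 1)^N := by rw [hB]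
  linarith
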